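/- Let H be a real inner product space, T ∈ H a fixed target, and define the boosting loss C : H → ℝ by C(F) = (1/2)·‖T − F‖², whose gradient at F is F − T. Fix L > 1, F⁰ ∈ H, and a sequence S¹, S², … in H with Sᵗ ≠ 0 for all t, and define recursively αₜ := −⟨Fᵗ⁻¹ − T, Sᵗ⟩ / (L·‖Sᵗ‖²) and Fᵗ := Fᵗ⁻¹ + αₜ·Sᵗ. If the procedure never halts, i.e. −⟨Fᵗ⁻¹ − T, Sᵗ⟩ > 0 for every t ≥ 1, then the series Σ_{t≥0} ⟨Fᵗ − T, Sᵗ⁺¹⟩² / ‖Sᵗ⁺¹‖² is summable, with sum at most 2·L·C(F⁰). In particular, if additionally ‖Sᵗ‖ ≤ R for all t and some R > 0, then ⟨Fᵗ − T, Sᵗ⁺¹⟩ → 0 as t → ∞. -/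

import Mathlib

open RealInnerProductSpace Filter

/-- Summing the per-step descent estimates over all non-halting boosting steps: the series
`Σₜ ⟨Fᵗ − T, Sᵗ⁺¹⟩² / ‖Sᵗ⁺¹‖²` is summable with sum at most `2·L·C(F⁰)`, and if the student
directions have norms bounded by some `R > 0` then `⟨Fᵗ − T, Sᵗ⁺¹⟩ → 0`. -/
theorem boosting_nonhalting_inner_products_vanish
    {H : Type*} [NormedAddCommGroup H] [InnerProductSpace ℝ H]
    (T : H) (L : ℝ) (hL : 1 < L) (F : ℕ → H) (S : ℕ → H) (α : ℕ → ℝ)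
    (hS : ∀ t, S t ≠ 0)
    (hα : ∀ t : ℕ, α (t + 1) = -(⟪F t - T, S (t + 1)⟫ : ℝ) / (L * ‖S (t + 1)‖ ^ 2))
    (hF : ∀ t : ℕ, F (t + 1) = F t + α (t + 1) • S (t + 1))
    (hnonhalt : ∀ t : ℕ, 0 < -(⟪F t - T, S (t + 1)⟫ : ℝ)) :
    Summable (fun t : ℕ => (⟪F t - T, S (t + 1)⟫ : ℝ) ^ 2 / ‖S (t + 1)‖ ^ 2) ∧
    (∑' t : ℕ, (⟪F t - T, S (t + 1)⟫ : ℝ) ^ 2 / ‖S (t + 1)‖ ^ 2) ≤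
      2 * L * ((1 / 2 : ℝ) * ‖T - F 0‖ ^ 2) ∧
    (∀ R : ℝ, 0 < R → (∀ t, ‖S t‖ ≤ R) →
      Tendsto (fun t : ℕ => (⟪F t - T, S (t + 1)⟫ : ℝ)) atTop (nhds 0)) := by
  have hL0 : (0:ℝ) < L := lt_trans one_pos hL
  set d : ℕ → ℝ := fun t => (⟪F t - T, S (t + 1)⟫ : ℝ) ^ 2 / ‖S (t + 1)‖ ^ 2 with hd
  set C : ℕ → ℝ := fun t => (1/2 : ℝ) * ‖T - F t‖ ^ 2 with hC
  have hdnn : ∀ t, 0 ≤ d t := fun t =>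
    div_nonneg (sq_nonneg _) (sq_nonneg _)
  have key : ∀ t, d t ≤ 2 * L * (C t - C (t + 1)) := by
    intro t
    have hns : (0:ℝ) < ‖S (t+1)‖ ^ 2 := pow_pos (norm_pos_iff.mpr (hS (t+1))) 2
    set a : ℝ := (⟪F t - T, S (t + 1)⟫ : ℝ) with ha
    have hnorm : ‖T - F (t+1)‖ ^ 2 =
        ‖F t - T‖ ^ 2 + 2 * (α (t+1) * a) + α (t+1) ^ 2 * ‖S (t+1)‖ ^ 2 := by
      have h1 : T - F (t+1) = -((F t - T) + α (t+1) • S (t+1)) := by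
        rw [hF t]; abel
      rw [h1, norm_neg, @norm_add_sq_real, inner_smul_right, norm_smul]
      simp only [Real.norm_eq_abs, mul_pow, sq_abs, ← ha]
    have hα' : α (t+1) = -a / (L * ‖S (t+1)‖ ^ 2) := hα t
    have hTn : ‖T - F t‖ = ‖F t - T‖ := norm_sub_rev _ _
    have : 2 * L * (C t - C (t+1)) =
        L * (-(2 * (α (t+1) * a)) - α (t+1) ^ 2 * ‖S (t+1)‖ ^ 2) := by
      simp only [hC, hTn, hnorm]; ring
    have hRHS : L * (-(2 * (α (t+1) * a)) - α (t+1) ^ 2 * ‖S (t+1)‖ ^ 2)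
        = (a ^ 2 / ‖S (t+1)‖ ^ 2) * (2 - 1/L) := by
      rw [hα']
      field_simp
    rw [this, hRHS, hd]
    have h21 : (1:ℝ) ≤ 2 - 1/L := by
      have : 1/L < 1 := by rw [div_lt_one hL0]; exact hL
      linarith
    have hnn : (0:ℝ) ≤ a ^ 2 / ‖S (t+1)‖ ^ 2 := div_nonneg (sq_nonneg _) hns.le
    have := mul_le_mul_of_nonneg_left h21 hnn
    simpa [ha] using this
  have hsum : ∀ n : ℕ, ∑ i ∈ Finset.range n, d i ≤ 2 * L * C 0 := by
    intro n
    calc ∑ i ∈ Finset.range n, d i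
        ≤ ∑ i ∈ Finset.range n, 2 * L * (C i - C (i+1)) :=
          Finset.sum_le_sum fun i _ => key i
      _ = 2 * L * (C 0 - C n) := by
          rw [← Finset.mul_sum, Finset.sum_range_sub' C]
      _ ≤ 2 * L * C 0 := by
          have : 0 ≤ C n := by positivity
          nlinarith
  have hsummable : Summable d :=
    summable_of_sum_range_le hdnn hsum
  have htsum : ∑' t, d t ≤ 2 * L * C 0 :=
    Summable.tsum_le_of_sum_range_le hsummable hsum
  refine ⟨hsummable, htsum, ?_⟩
  intro R hR hRS
  have hd0 : Tendsto d atTop (nhds 0) := hsummable.tendsto_atTop_zero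
  have hsq : Tendsto (fun t : ℕ => (⟪F t - T, S (t + 1)⟫ : ℝ) ^ 2) atTop (nhds 0) := by
    have := hd0.const_mul (R ^ 2)
    rw [mul_zero] at this
    refine squeeze_zero (fun t => sq_nonneg _) (fun t => ?_) this
    have hns : (0:ℝ) < ‖S (t+1)‖ ^ 2 := pow_pos (norm_pos_iff.mpr (hS (t+1))) 2
    have h1 : (⟪F t - T, S (t + 1)⟫ : ℝ) ^ 2 = ‖S (t+1)‖ ^ 2 * d t := by
      simp only [hd]
      field_simp
      rw [mul_div_assoc, div_self (norm_ne_zero_iff.mpr (hS (t+1))), mul_one]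
    rw [h1]
    have hle : ‖S (t+1)‖ ^ 2 ≤ R ^ 2 :=
      pow_le_pow_left₀ (norm_nonneg _) (hRS (t+1)) 2
    exact mul_le_mul_of_nonneg_right hle (hdnn t)
  have := hsq.sqrt
  simp only [Real.sqrt_zero, Real.sqrt_sq_eq_abs] at this
  exact tendsto_zero_iff_abs_tendsto_zero _ |>.mpr this
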